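/- Let X, Y be real Banach spaces, U ⊆ X open, f : U → Y continuous, and Jf a pseudo-Jacobian mapping for f on U which is upper semicontinuous at a point x ∈ U. Assume that every operator T in the convex hull co Jf(x) is an isomorphism from X onto Y, and that β := inf{//T// : T ∈ co Jf(x)} > 0, where //T// denotes the co-norm of T. Then Jf is regular at x and the regularity index satisfies α_{Jf}(x) = β. -/

import Mathlib

open Filter Topology Metric Set Bornology

noncomputable section

/-- Upper right-hand Dini directional derivative of `φ` at `x` in direction `v`. -/
def diniUpper {X : Type*} [NormedAddCommGroup X] [NormedSpace ℝ X]
    (φ : X → ℝ) (x v : X) : ℝ :=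
  Filter.limsup (fun t : ℝ => (φ (x + t • v) - φ x) / t) (𝓝[>] (0 : ℝ))

/-- `J` is a pseudo-Jacobian of `f` at `x`: `J` is a nonempty set of bounded linear
operators such that for every continuous linear functional `p` on `Y` and every
direction `v`, the upper Dini derivative of `p ∘ f` at `x` in direction `v` is bounded
by `sup {p (T v) : T ∈ J}`. -/
def IsPseudoJacobianAt {X Y : Type*} [NormedAddCommGroup X] [NormedSpace ℝ X]
    [NormedAddCommGroup Y] [NormedSpace ℝ Y]
    (f : X → Y) (J : Set (X →L[ℝ] Y)) (x : X) : Prop :=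
  J.Nonempty ∧ ∀ (p : Y →L[ℝ] ℝ) (v : X),
    diniUpper (fun z => p (f z)) x v ≤ sSup ((fun T : X →L[ℝ] Y => p (T v)) '' J)


/-- The co-norm of a bounded linear operator: `//T// = inf {‖T x‖ : ‖x‖ = 1}`. -/
def conorm {X Y : Type*} [NormedAddCommGroup X] [NormedSpace ℝ X]
    [NormedAddCommGroup Y] [NormedSpace ℝ Y] (T : X →L[ℝ] Y) : ℝ :=
  sInf {c : ℝ | ∃ x : X, ‖x‖ = 1 ∧ c = ‖T x‖}

/-- `T` is an isomorphism of Banach spaces, i.e. a bijective bounded linear operator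
with bounded inverse. -/
def IsBanachIso {X Y : Type*} [NormedAddCommGroup X] [NormedSpace ℝ X]
    [NormedAddCommGroup Y] [NormedSpace ℝ Y] (T : X →L[ℝ] Y) : Prop :=
  ∃ e : X ≃L[ℝ] Y, (e : X →L[ℝ] Y) = T

/-- `Jf(B(x, r)) = ⋃_{z ∈ B(x,r)} Jf z`. -/
def pjBall {X Y : Type*} [NormedAddCommGroup X] [NormedSpace ℝ X]
    [NormedAddCommGroup Y] [NormedSpace ℝ Y]
    (Jf : X → Set (X →L[ℝ] Y)) (x : X) (r : ℝ) : Set (X →L[ℝ] Y) :=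
  ⋃ z ∈ Metric.ball x r, Jf z

/-- The regularity index of `Jf` at `x`:
`α_{Jf}(x) = sup_{r > 0} inf {//T// : T ∈ co Jf(B(x,r))}`. -/
def regIndex {X Y : Type*} [NormedAddCommGroup X] [NormedSpace ℝ X]
    [NormedAddCommGroup Y] [NormedSpace ℝ Y]
    (Jf : X → Set (X →L[ℝ] Y)) (x : X) : ℝ :=
  sSup {c : ℝ | ∃ r > 0, c = sInf (conorm '' convexHull ℝ (pjBall Jf x r))}

/-- `Jf` is regular at `x`: for some `r > 0` every operator in `co Jf(B(x,r))` is an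
isomorphism, and the regularity index at `x` is positive. -/
def IsRegularAt {X Y : Type*} [NormedAddCommGroup X] [NormedSpace ℝ X]
    [NormedAddCommGroup Y] [NormedSpace ℝ Y]
    (Jf : X → Set (X →L[ℝ] Y)) (x : X) : Prop :=
  (∃ r > 0, ∀ T ∈ convexHull ℝ (pjBall Jf x r), IsBanachIso T) ∧ 0 < regIndex Jf x

open Pointwise

/-- If `Jf` is upper semicontinuous at `x`, every operator in `co Jf(x)` is an
isomorphism, and `inf {//T// : T ∈ co Jf(x)} > 0`, then `Jf` is regular at `x` and
`α_{Jf}(x) = inf {//T// : T ∈ co Jf(x)}`. -/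
theorem regular_of_usc
    {X Y : Type*} [NormedAddCommGroup X] [NormedSpace ℝ X] [CompleteSpace X]
    [NormedAddCommGroup Y] [NormedSpace ℝ Y] [CompleteSpace Y]
    {U : Set X} (hUopen : IsOpen U)
    {f : X → Y} (hf : ContinuousOn f U)
    {Jf : X → Set (X →L[ℝ] Y)} (hJf : ∀ z ∈ U, IsPseudoJacobianAt f (Jf z) z)
    {x : X} (hx : x ∈ U)
    (husc : ∀ ε > 0, ∃ δ > 0, Metric.ball x δ ⊆ U ∧
      ∀ z ∈ Metric.ball x δ, ∀ T ∈ Jf z, ∃ T₀ ∈ Jf x, ‖T - T₀‖ < ε)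
    (hiso : ∀ T ∈ convexHull ℝ (Jf x), IsBanachIso T)
    (hβ : 0 < sInf (conorm '' convexHull ℝ (Jf x))) :
    IsRegularAt Jf x ∧ regIndex Jf x = sInf (conorm '' convexHull ℝ (Jf x)) := by
  classical
  set β := sInf (conorm '' convexHull ℝ (Jf x)) with hβdef
  obtain ⟨T1, hT1⟩ := (hJf x hx).1
  have hco_nonneg : ∀ T : X →L[ℝ] Y, 0 ≤ conorm T := by
    intro T
    apply Real.sInf_nonneg
    rintro c ⟨u, hu, rfl⟩
    exact norm_nonneg _
  have hbdd : ∀ s : Set (X →L[ℝ] Y), BddBelow (conorm '' s) := by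
    intro s
    exact ⟨0, by rintro c ⟨T, -, rfl⟩; exact hco_nonneg T⟩
  -- X is nontrivial, otherwise β = 0
  have hX : ∃ u : X, ‖u‖ = 1 := by
    by_contra h
    push_neg at h
    have hempty : {c : ℝ | ∃ u : X, ‖u‖ = 1 ∧ c = ‖T1 u‖} = ∅ :=
      Set.eq_empty_iff_forall_notMem.2 (by rintro c ⟨u, hu, -⟩; exact h u hu)
    have h0 : conorm T1 = 0 := by rw [conorm, hempty, Real.sInf_empty]
    have hle : β ≤ conorm T1 := csInf_le (hbdd _) ⟨T1, subset_convexHull ℝ _ hT1, rfl⟩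
    rw [h0] at hle
    linarith
  obtain ⟨u₀, hu₀⟩ := hX
  -- key pointwise lower bound
  have hA : ∀ (T : X →L[ℝ] Y) (v : X), conorm T * ‖v‖ ≤ ‖T v‖ := by
    intro T v
    rcases eq_or_ne v 0 with rfl | hv
    · simp
    · have hv' : ‖v‖ ≠ 0 := norm_ne_zero_iff.2 hv
      have hv0 : (0:ℝ) < ‖v‖ := lt_of_le_of_ne (norm_nonneg v) (Ne.symm hv')
      have h1 : ‖(‖v‖⁻¹ • v)‖ = 1 := by
        rw [norm_smul, norm_inv, norm_norm, inv_mul_cancel₀ hv']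
      have h2 : conorm T ≤ ‖T (‖v‖⁻¹ • v)‖ :=
        csInf_le ⟨0, by rintro c ⟨u, hu, rfl⟩; exact norm_nonneg _⟩ ⟨_, h1, rfl⟩
      have h3 : ‖T (‖v‖⁻¹ • v)‖ = ‖v‖⁻¹ * ‖T v‖ := by
        rw [map_smul, norm_smul, norm_inv, norm_norm]
      rw [h3] at h2
      have h4 := mul_le_mul_of_nonneg_right h2 (norm_nonneg v)
      have h5 : ‖v‖⁻¹ * ‖T v‖ * ‖v‖ = ‖T v‖ := by
        field_simp
      rw [h5] at h4
      exact h4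
  have hB : ∀ (T : X →L[ℝ] Y) (c : ℝ), (∀ u : X, ‖u‖ = 1 → c ≤ ‖T u‖) → c ≤ conorm T := by
    intro T c h
    exact le_csInf ⟨‖T u₀‖, u₀, hu₀, rfl⟩ (by rintro b ⟨u, hu, rfl⟩; exact h u hu)
  have hβle : ∀ T₀ ∈ convexHull ℝ (Jf x), β ≤ conorm T₀ := by
    intro T₀ hT₀
    exact csInf_le (hbdd _) ⟨T₀, hT₀, rfl⟩
  -- main helper
  have key : ∀ ε : ℝ, 0 < ε → ε < β → ∃ δ > 0,
      ∀ T ∈ convexHull ℝ (pjBall Jf x δ), IsBanachIso T ∧ β - ε ≤ conorm T := by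
    intro ε hε hεβ
    obtain ⟨δ, hδ, -, husc'⟩ := husc ε hε
    refine ⟨δ, hδ, ?_⟩
    have hsub : convexHull ℝ (pjBall Jf x δ) ⊆
        convexHull ℝ (Jf x) + Metric.closedBall (0 : X →L[ℝ] Y) ε := by
      apply convexHull_min
      · rintro T hT
        simp only [pjBall, mem_iUnion, exists_prop] at hT
        obtain ⟨z, hz, hTz⟩ := hT
        obtain ⟨T₀, hT₀, hnear⟩ := husc' z hz T hTz
        exact ⟨T₀, subset_convexHull ℝ _ hT₀, T - T₀,
          by simpa [Metric.mem_closedBall, dist_zero_right] using hnear.le, by module⟩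
      · exact (convex_convexHull ℝ _).add (convex_closedBall (0 : X →L[ℝ] Y) ε)
    intro T hT
    obtain ⟨T₀, hT₀, S, hS, rfl⟩ := hsub hT
    rw [Metric.mem_closedBall, dist_zero_right] at hS
    have hβT₀ := hβle T₀ hT₀
    constructor
    · -- isomorphism
      obtain ⟨e, he⟩ := hiso T₀ hT₀
      have hes : ∀ y : Y, β * ‖e.symm y‖ ≤ ‖y‖ := by
        intro y
        calc β * ‖e.symm y‖ ≤ conorm T₀ * ‖e.symm y‖ :=
              mul_le_mul_of_nonneg_right hβT₀ (norm_nonneg _)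
          _ ≤ ‖T₀ (e.symm y)‖ := hA T₀ _
          _ = ‖y‖ := by rw [← he]; simp
      have hesnorm : ‖(e.symm : Y →L[ℝ] X)‖ ≤ β⁻¹ := by
        apply ContinuousLinearMap.opNorm_le_bound _ (by positivity)
        intro y
        rw [inv_mul_eq_div, le_div_iff₀ hβ]
        calc ‖(e.symm : Y →L[ℝ] X) y‖ * β = β * ‖e.symm y‖ := mul_comm _ _
          _ ≤ ‖y‖ := hes y
      have hcomp : ‖(e.symm : Y →L[ℝ] X).comp S‖ < 1 := by
        have h1 : ‖(e.symm : Y →L[ℝ] X).comp S‖ ≤ ‖(e.symm : Y →L[ℝ] X)‖ * ‖S‖ :=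
          ContinuousLinearMap.opNorm_comp_le _ _
        have h2 : ‖(e.symm : Y →L[ℝ] X)‖ * ‖S‖ ≤ β⁻¹ * ε :=
          mul_le_mul hesnorm hS (norm_nonneg _) (by positivity)
        have h3 : β⁻¹ * ε < 1 := by
          rw [inv_mul_lt_iff₀ hβ, mul_one]
          exact hεβ
        linarith
      have ht : ‖-((e.symm : Y →L[ℝ] X).comp S)‖ < 1 := by rwa [norm_neg]
      let u : (X →L[ℝ] X)ˣ := Units.oneSub _ ht
      let w : X ≃L[ℝ] X := ContinuousLinearEquiv.unitsEquiv ℝ X u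
      refine ⟨w.trans e, ?_⟩
      ext v
      have hw : w v = v + e.symm (S v) := by
        show (u : X →L[ℝ] X) v = _
        simp [u, Units.oneSub, sub_neg_eq_add]
      simp only [ContinuousLinearEquiv.coe_coe, ContinuousLinearEquiv.trans_apply, hw,
        ContinuousLinearMap.add_apply]
      rw [map_add, e.apply_symm_apply, ← he]
      rfl
    · -- conorm lower bound
      apply hB
      intro u hu
      have h1 : conorm T₀ * ‖u‖ ≤ ‖T₀ u‖ := hA T₀ u
      have h2 : ‖S u‖ ≤ ‖S‖ * ‖u‖ := S.le_opNorm u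
      have h3 := norm_add_le (T₀ u + S u) (-(S u))
      simp only [add_neg_cancel_right, norm_neg] at h3
      have h4 : (T₀ + S) u = T₀ u + S u := rfl
      rw [h4, hu] at *
      rw [hu] at h1 h2
      simp only [mul_one] at h1 h2
      linarith
  -- the set defining regIndex
  set A := {c : ℝ | ∃ r > 0, c = sInf (conorm '' convexHull ℝ (pjBall Jf x r))} with hA'
  have hreg : regIndex Jf x = sSup A := rfl
  have hxmem : ∀ r : ℝ, 0 < r → Jf x ⊆ pjBall Jf x r := by
    intro r hr T hT
    exact Set.mem_biUnion (Metric.mem_ball_self hr) hT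
  have hupperA : ∀ c ∈ A, c ≤ β := by
    rintro c ⟨r, hr, rfl⟩
    exact csInf_le_csInf (hbdd _) ⟨conorm T1, T1, subset_convexHull ℝ _ hT1, rfl⟩
      (Set.image_mono (convexHull_mono (hxmem r hr)))
  have hAne : A.Nonempty := ⟨_, 1, one_pos, rfl⟩
  have hbddA : BddAbove A := ⟨β, hupperA⟩
  have hupper : sSup A ≤ β := csSup_le hAne hupperA
  have hlower : β ≤ sSup A := by
    apply le_of_forall_pos_le_add
    intro ε hε
    set ε' := min ε (β / 2) with hε'
    have hε'pos : 0 < ε' := lt_min hε (by linarith)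
    have hε'β : ε' < β := lt_of_le_of_lt (min_le_right _ _) (by linarith)
    obtain ⟨δ, hδ, hkey⟩ := key ε' hε'pos hε'β
    have h1 : β - ε' ≤ sInf (conorm '' convexHull ℝ (pjBall Jf x δ)) := by
      refine le_csInf ⟨conorm T1, T1, subset_convexHull ℝ _ (hxmem δ hδ hT1), rfl⟩ ?_
      rintro b ⟨T, hT, rfl⟩
      exact (hkey T hT).2
    have h2 : sInf (conorm '' convexHull ℝ (pjBall Jf x δ)) ≤ sSup A :=
      le_csSup hbddA ⟨δ, hδ, rfl⟩
    have h3 : ε' ≤ ε := min_le_left _ _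
    linarith
  have heq : regIndex Jf x = β := by rw [hreg]; exact le_antisymm hupper hlower
  refine ⟨⟨?_, by rw [heq]; exact hβ⟩, heq⟩
  obtain ⟨δ, hδ, hkey⟩ := key (β / 2) (by linarith) (by linarith)
  exact ⟨δ, hδ, fun T hT => (hkey T hT).1⟩

end
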